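/- If ε ≥ 1/2 − ρ, then the closed ε-neighborhood S_ε is a connected set. -/

import Mathlib

open Metric Set Bornology

/-- The vertices of the unit equilateral triangle. -/
noncomputable def v0 : EuclideanSpace ℝ (Fin 2) :=
  (WithLp.equiv 2 (Fin 2 → ℝ)).symm ![0, 0]

noncomputable def v1 : EuclideanSpace ℝ (Fin 2) :=
  (WithLp.equiv 2 (Fin 2 → ℝ)).symm ![1, 0]

noncomputable def v2 : EuclideanSpace ℝ (Fin 2) :=
  (WithLp.equiv 2 (Fin 2 → ℝ)).symm ![1 / 2, Real.sqrt 3 / 2]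

/-- The homothety with center `v0` (resp. `v1`, `v2`) and ratio `ρ`. -/
noncomputable def f0 (ρ : ℝ) (x : EuclideanSpace ℝ (Fin 2)) : EuclideanSpace ℝ (Fin 2) :=
  v0 + ρ • (x - v0)

noncomputable def f1 (ρ : ℝ) (x : EuclideanSpace ℝ (Fin 2)) : EuclideanSpace ℝ (Fin 2) :=
  v1 + ρ • (x - v1)

noncomputable def f2 (ρ : ℝ) (x : EuclideanSpace ℝ (Fin 2)) : EuclideanSpace ℝ (Fin 2) :=
  v2 + ρ • (x - v2)

/-- The union of the images of a set under the three homotheties. -/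
noncomputable def sierpPhi (ρ : ℝ) (X : Set (EuclideanSpace ℝ (Fin 2))) :
    Set (EuclideanSpace ℝ (Fin 2)) :=
  f0 ρ '' X ∪ f1 ρ '' X ∪ f2 ρ '' X

/-- The filled equilateral triangle. -/
noncomputable def sierpT : Set (EuclideanSpace ℝ (Fin 2)) :=
  convexHull ℝ {v0, v1, v2}

/-- The generalized Sierpinski triangle with contraction ratio `ρ`. -/
noncomputable def sierpinski (ρ : ℝ) : Set (EuclideanSpace ℝ (Fin 2)) :=
  ⋂ k : ℕ, (sierpPhi ρ)^[k] sierpT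

section Aux

local notation "E2" => EuclideanSpace ℝ (Fin 2)

/-- Nested intersection of compact connected sets is connected. -/
lemma sierpAux_isConnected_iInter_of_antitone {α : Type*} [TopologicalSpace α] [T2Space α]
    {K : ℕ → Set α} (hK : ∀ n, K (n + 1) ⊆ K n)
    (hc : ∀ n, IsCompact (K n)) (hconn : ∀ n, IsConnected (K n)) :
    IsConnected (⋂ n, K n) := by
  have hanti : Antitone K := antitone_nat_of_succ_le hK
  have hcl : ∀ n, IsClosed (K n) := fun n => (hc n).isClosed
  have hdir : Directed (· ⊇ ·) K := hanti.directed_ge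
  have hne : (⋂ n, K n).Nonempty :=
    IsCompact.nonempty_iInter_of_directed_nonempty_isCompact_isClosed K hdir
      (fun n => (hconn n).nonempty) hc hcl
  refine ⟨hne, ?_⟩
  set S := ⋂ n, K n with hS
  have hScl : IsClosed S := isClosed_iInter hcl
  intro u v hu hv huv hne1 hne2
  obtain ⟨x, hx⟩ := hne1
  obtain ⟨y, hy⟩ := hne2
  have hxS : x ∈ S := hx.1
  have hxu : x ∈ u := hx.2
  have hyS : y ∈ S := hy.1
  have hyv : y ∈ v := hy.2
  by_contra hcon
  rw [Set.not_nonempty_iff_eq_empty] at hcon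
  have hdisj : ∀ z ∈ S, z ∈ u → z ∉ v := fun z hz hzu hzv =>
    (Set.eq_empty_iff_forall_notMem.1 hcon z) (Set.mem_inter hz (Set.mem_inter hzu hzv))
  have hSu : S ∩ u = S \ v := by
    apply Set.Subset.antisymm
    · intro z hz; exact ⟨hz.1, hdisj z hz.1 hz.2⟩
    · intro z hz
      rcases huv hz.1 with h' | h'
      · exact ⟨hz.1, h'⟩
      · exact absurd h' hz.2
  have hSv : S ∩ v = S \ u := by
    apply Set.Subset.antisymm
    · intro z hz
      exact ⟨hz.1, fun hzu => hdisj z hz.1 hzu hz.2⟩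
    · intro z hz
      rcases huv hz.1 with h' | h'
      · exact absurd h' hz.2
      · exact ⟨hz.1, h'⟩
  have hc1 : IsCompact (S \ v) := by
    refine (hc 0).of_isClosed_subset (hScl.inter hv.isClosed_compl) ?_
    exact fun z hz => iInter_subset K 0 hz.1
  have hc2 : IsCompact (S \ u) := by
    refine (hc 0).of_isClosed_subset (hScl.inter hu.isClosed_compl) ?_
    exact fun z hz => iInter_subset K 0 hz.1
  have hdd : Disjoint (S \ v) (S \ u) := by
    rw [Set.disjoint_left]
    intro z hz1 hz2
    rcases huv hz1.1 with h' | h' <;> [exact hz2.2 h'; exact hz1.2 h']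
  obtain ⟨u', v', hu', hv', hsub1, hsub2, hdisj'⟩ :=
    SeparatedNhds.of_isCompact_isCompact hc1 hc2 hdd
  obtain ⟨n, hn⟩ : ∃ n, K n ⊆ u' ∪ v' := by
    by_contra hno
    push_neg at hno
    have hLne : ∀ n, (K n \ (u' ∪ v')).Nonempty := by
      intro n
      rcases Set.not_subset.1 (hno n) with ⟨z, hz1, hz2⟩
      exact ⟨z, hz1, hz2⟩
    have hLcl : ∀ n, IsClosed (K n \ (u' ∪ v')) := fun n =>
      (hcl n).inter (hu'.union hv').isClosed_compl
    have hLc : ∀ n, IsCompact (K n \ (u' ∪ v')) := fun n =>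
      (hc n).of_isClosed_subset (hLcl n) diff_subset
    have hLdir : Directed (· ⊇ ·) (fun n => K n \ (u' ∪ v')) := by
      intro m n
      refine ⟨max m n, ?_, ?_⟩ <;> intro z hz <;>
        exact ⟨hanti (by omega) hz.1, hz.2⟩
    obtain ⟨z, hz⟩ := IsCompact.nonempty_iInter_of_directed_nonempty_isCompact_isClosed
      _ hLdir hLne hLc hLcl
    simp only [Set.mem_iInter, Set.mem_diff] at hz
    have hzS : z ∈ S := Set.mem_iInter.2 fun n => (hz n).1
    have hznot : z ∉ u' ∪ v' := (hz 0).2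
    rcases huv hzS with h' | h'
    · exact hznot (Or.inl (hsub1 ⟨hzS, hdisj z hzS h'⟩))
    · have : z ∉ u := fun hzu => hdisj z hzS hzu h'
      exact hznot (Or.inr (hsub2 ⟨hzS, this⟩))
  have hKxu' : (K n ∩ u').Nonempty :=
    ⟨x, Set.mem_iInter.1 hxS n, hsub1 ⟨hxS, hdisj x hxS hxu⟩⟩
  have hKyv' : (K n ∩ v').Nonempty :=
    ⟨y, Set.mem_iInter.1 hyS n, hsub2 ⟨hyS, fun hyu => hdisj y hyS hyu hyv⟩⟩
  obtain ⟨z, _, hz2⟩ := (hconn n).isPreconnected u' v' hu' hv' hn hKxu' hKyv'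
  exact Set.disjoint_left.1 hdisj' hz2.1 hz2.2

lemma sierpAux_homothety_dist (c x y : E2) {ρ : ℝ} (hρ : 0 ≤ ρ) :
    dist (c + ρ • (x - c)) (c + ρ • (y - c)) = ρ * dist x y := by
  have h : (c + ρ • (x - c)) - (c + ρ • (y - c)) = ρ • (x - y) := by module
  rw [dist_eq_norm, h, norm_smul, Real.norm_eq_abs, abs_of_nonneg hρ, dist_eq_norm]

lemma sierpAux_homothety_leftinv (c : E2) {ρ : ℝ} (hρ : ρ ≠ 0) (x : E2) :
    c + ρ • ((c + ρ⁻¹ • (x - c)) - c) = x := by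
  rw [add_sub_cancel_left, smul_smul, mul_inv_cancel₀ hρ, one_smul, add_sub_cancel]

lemma sierpAux_homothety_image_closedBall (c a : E2) {ρ : ℝ} (hρ : 0 < ρ) (r : ℝ) :
    (fun x => c + ρ • (x - c)) '' closedBall a r = closedBall (c + ρ • (a - c)) (ρ * r) := by
  ext x
  simp only [mem_image, mem_closedBall]
  constructor
  · rintro ⟨y, hy, rfl⟩
    rw [sierpAux_homothety_dist c y a hρ.le]
    exact mul_le_mul_of_nonneg_left hy hρ.le
  · intro hx
    refine ⟨c + ρ⁻¹ • (x - c), ?_, sierpAux_homothety_leftinv c hρ.ne' x⟩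
    have h := sierpAux_homothety_dist c (c + ρ⁻¹ • (x - c)) a hρ.le
    rw [sierpAux_homothety_leftinv c hρ.ne' x] at h
    have h2 := hx
    rw [h] at h2
    exact le_of_mul_le_mul_left h2 hρ

lemma sierpAux_homothety_cthickening_image (c : E2) {ρ : ℝ} (hρ : 0 < ρ) {A : Set E2}
    (hA : IsCompact A) {δ : ℝ} (hδ : 0 ≤ δ) :
    cthickening δ ((fun x => c + ρ • (x - c)) '' A)
      = (fun x => c + ρ • (x - c)) '' cthickening (δ / ρ) A := by
  have hcont : Continuous fun x : E2 => c + ρ • (x - c) :=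
    continuous_const.add ((continuous_id.sub continuous_const).const_smul ρ)
  have hAc : IsCompact ((fun x : E2 => c + ρ • (x - c)) '' A) := hA.image hcont
  have hδρ : 0 ≤ δ / ρ := div_nonneg hδ hρ.le
  rw [hAc.cthickening_eq_biUnion_closedBall hδ, hA.cthickening_eq_biUnion_closedBall hδρ,
    Set.image_iUnion₂, Set.biUnion_image]
  refine Set.iUnion₂_congr fun a ha => ?_
  rw [sierpAux_homothety_image_closedBall c a hρ, mul_comm, div_mul_cancel₀ δ hρ.ne']

lemma sierpAux_sq3 : Real.sqrt 3 ^ 2 = 3 := Real.sq_sqrt (by norm_num)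

lemma sierpAux_dist_v0_v1 : dist v0 v1 = 1 := by
  rw [EuclideanSpace.dist_eq]
  simp [v0, v1, Fin.sum_univ_two, Real.dist_eq]

lemma sierpAux_dist_v0_v2 : dist v0 v2 = 1 := by
  rw [EuclideanSpace.dist_eq]
  simp only [v0, v2, WithLp.equiv_symm_apply, WithLp.ofLp_toLp, Fin.sum_univ_two, Matrix.cons_val_zero,
    Matrix.cons_val_one, Matrix.head_cons, Real.dist_eq]
  rw [show |(0:ℝ) - 1/2| ^ 2 + |(0:ℝ) - Real.sqrt 3 / 2| ^ 2 = 1 by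
    rw [sq_abs, sq_abs]
    have h3 := sierpAux_sq3
    nlinarith [h3], Real.sqrt_one]

lemma sierpAux_dist_v1_v2 : dist v1 v2 = 1 := by
  rw [EuclideanSpace.dist_eq]
  simp only [v1, v2, WithLp.equiv_symm_apply, WithLp.ofLp_toLp, Fin.sum_univ_two, Matrix.cons_val_zero,
    Matrix.cons_val_one, Matrix.head_cons, Real.dist_eq]
  rw [show |(1:ℝ) - 1/2| ^ 2 + |(0:ℝ) - Real.sqrt 3 / 2| ^ 2 = 1 by
    rw [sq_abs, sq_abs]
    have h3 := sierpAux_sq3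
    nlinarith [h3], Real.sqrt_one]

/-- The bridging point between the thickenings of two adjacent pieces. -/
lemma sierpAux_bridge (c d : E2) {ρ δ : ℝ} (hρ0 : 0 < ρ) (hρ : ρ ≤ 1 / 2)
    (hδ : 1 / 2 - ρ ≤ δ) (hcd : dist c d = 1) {A : Set E2} (hcA : c ∈ A) (hdA : d ∈ A) :
    ∃ m, m ∈ cthickening δ ((fun x => c + ρ • (x - c)) '' A) ∧
      m ∈ cthickening δ ((fun x => d + ρ • (x - d)) '' A) := by
  set p := c + ρ • (d - c) with hp
  set q := d + ρ • (c - d) with hq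
  have hpq : dist p q = 1 - 2 * ρ := by
    have hsub : p - q = (1 - 2 * ρ) • (c - d) := by rw [hp, hq]; module
    rw [dist_eq_norm, hsub, norm_smul, Real.norm_eq_abs, abs_of_nonneg (by linarith),
      ← dist_eq_norm, hcd, mul_one]
  refine ⟨midpoint ℝ p q, ?_, ?_⟩
  · refine mem_cthickening_of_dist_le _ p δ _ (Set.mem_image_of_mem _ hdA) ?_
    rw [dist_midpoint_left (𝕜 := ℝ), hpq]
    rw [show ‖(2:ℝ)‖⁻¹ = 1/2 by norm_num]
    linarith
  · refine mem_cthickening_of_dist_le _ q δ _ (Set.mem_image_of_mem _ hcA) ?_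
    rw [dist_midpoint_right (𝕜 := ℝ), hpq]
    rw [show ‖(2:ℝ)‖⁻¹ = 1/2 by norm_num]
    linarith

end Aux

/-- If `ε ≥ 1/2 − ρ`, then the closed `ε`-neighborhood `S_ε` is a
connected set. -/
theorem sierpinski_cthickening_connected
    (ρ : ℝ) (hρ0 : 0 < ρ) (hρ : ρ ≤ 1 / 2) (ε : ℝ) (hε : 1 / 2 - ρ ≤ ε) :
    IsConnected (Metric.cthickening ε (sierpinski ρ)) := by
  have hε0 : (0:ℝ) ≤ ε := le_trans (by linarith) hε
  set A : ℕ → Set (EuclideanSpace ℝ (Fin 2)) := fun k => (sierpPhi ρ)^[k] sierpT with hA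
  have hcont : ∀ c : EuclideanSpace ℝ (Fin 2),
      Continuous (fun x : EuclideanSpace ℝ (Fin 2) => c + ρ • (x - c)) := fun c =>
    continuous_const.add ((continuous_id.sub continuous_const).const_smul ρ)
  have hTfin : Set.Finite {v0, v1, v2} :=
    (Set.finite_singleton v2).insert v1 |>.insert v0
  have hTc : IsCompact sierpT := hTfin.isCompact_convexHull ℝ
  have hTconv : Convex ℝ sierpT := convex_convexHull ℝ _
  have hv0T : v0 ∈ sierpT := subset_convexHull ℝ _ (by simp)
  have hv1T : v1 ∈ sierpT := subset_convexHull ℝ _ (by simp)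
  have hv2T : v2 ∈ sierpT := subset_convexHull ℝ _ (by simp)
  -- compactness
  have hAc : ∀ k, IsCompact (A k) := by
    intro k
    induction k with
    | zero => exact hTc
    | succ k ih =>
      show IsCompact ((sierpPhi ρ)^[k+1] sierpT)
      rw [Function.iterate_succ_apply']
      exact ((ih.image (hcont v0)).union (ih.image (hcont v1))).union (ih.image (hcont v2))
  -- vertices belong to every stage
  have hfix : ∀ c : EuclideanSpace ℝ (Fin 2), c + ρ • (c - c) = c := by
    intro c; rw [sub_self, smul_zero, add_zero]
  have hva : ∀ k, v0 ∈ A k ∧ v1 ∈ A k ∧ v2 ∈ A k := by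
    intro k
    induction k with
    | zero => exact ⟨hv0T, hv1T, hv2T⟩
    | succ k ih =>
      have h0 : v0 ∈ A (k+1) := by
        show v0 ∈ (sierpPhi ρ)^[k+1] sierpT
        rw [Function.iterate_succ_apply']
        exact Or.inl (Or.inl ⟨v0, ih.1, hfix v0⟩)
      have h1 : v1 ∈ A (k+1) := by
        show v1 ∈ (sierpPhi ρ)^[k+1] sierpT
        rw [Function.iterate_succ_apply']
        exact Or.inl (Or.inr ⟨v1, ih.2.1, hfix v1⟩)
      have h2 : v2 ∈ A (k+1) := by
        show v2 ∈ (sierpPhi ρ)^[k+1] sierpT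
        rw [Function.iterate_succ_apply']
        exact Or.inr ⟨v2, ih.2.2, hfix v2⟩
      exact ⟨h0, h1, h2⟩
  -- monotonicity
  have hPhiMono : ∀ X Y : Set (EuclideanSpace ℝ (Fin 2)), X ⊆ Y → sierpPhi ρ X ⊆ sierpPhi ρ Y := by
    intro X Y hXY
    exact Set.union_subset_union (Set.union_subset_union (Set.image_mono hXY)
      (Set.image_mono hXY)) (Set.image_mono hXY)
  have hPhiT : sierpPhi ρ sierpT ⊆ sierpT := by
    have key : ∀ c ∈ sierpT, ∀ x ∈ sierpT, c + ρ • (x - c) ∈ sierpT := by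
      intro c hc x hx
      have : c + ρ • (x - c) = (1 - ρ) • c + ρ • x := by module
      rw [this]
      exact hTconv hc hx (by linarith) hρ0.le (by ring)
    rintro x ((⟨y, hy, rfl⟩ | ⟨y, hy, rfl⟩) | ⟨y, hy, rfl⟩)
    · exact key v0 hv0T y hy
    · exact key v1 hv1T y hy
    · exact key v2 hv2T y hy
  have hstep : ∀ k, A (k + 1) ⊆ A k := by
    intro k
    induction k with
    | zero =>
      show (sierpPhi ρ)^[1] sierpT ⊆ (sierpPhi ρ)^[0] sierpT
      simpa using hPhiT
    | succ k ih =>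
      have e2 := Function.iterate_succ_apply' (sierpPhi ρ) k sierpT
      show (sierpPhi ρ)^[k+2] sierpT ⊆ (sierpPhi ρ)^[k+1] sierpT
      rw [Function.iterate_succ_apply' (sierpPhi ρ) (k+1), e2]
      apply hPhiMono
      rw [← e2]
      exact ih
  have hAnti : Antitone A := antitone_nat_of_succ_le hstep
  -- connectivity of thickenings of every stage
  have hconn : ∀ k, ∀ δ : ℝ, 1 / 2 - ρ ≤ δ → IsConnected (cthickening δ (A k)) := by
    intro k
    induction k with
    | zero =>
      intro δ hδ
      have hδ0 : (0:ℝ) ≤ δ := le_trans (by linarith) hδ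
      exact (hTconv.cthickening δ).isConnected
        ⟨v0, self_subset_cthickening _ hv0T⟩
    | succ k ih =>
      intro δ hδ
      have hδ0 : (0:ℝ) ≤ δ := le_trans (by linarith) hδ
      have hδρ : 1 / 2 - ρ ≤ δ / ρ := by
        refine le_trans hδ ?_
        rw [le_div_iff₀ hρ0]
        nlinarith
      have himg : ∀ c : EuclideanSpace ℝ (Fin 2),
          IsConnected (cthickening δ ((fun x => c + ρ • (x - c)) '' A k)) := by
        intro c
        rw [sierpAux_homothety_cthickening_image c hρ0 (hAc k) hδ0]
        exact (ih _ hδρ).image _ (hcont c).continuousOn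
      have hAk1 : A (k + 1) = (fun x => v0 + ρ • (x - v0)) '' A k
          ∪ (fun x => v1 + ρ • (x - v1)) '' A k ∪ (fun x => v2 + ρ • (x - v2)) '' A k := by
        show (sierpPhi ρ)^[k+1] sierpT = _
        rw [Function.iterate_succ_apply']
        rfl
      rw [hAk1, cthickening_union, cthickening_union]
      obtain ⟨m01, hm01a, hm01b⟩ := sierpAux_bridge v0 v1 hρ0 hρ hδ sierpAux_dist_v0_v1
        (hva k).1 (hva k).2.1
      obtain ⟨m02, hm02a, hm02b⟩ := sierpAux_bridge v0 v2 hρ0 hρ hδ sierpAux_dist_v0_v2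
        (hva k).1 (hva k).2.2
      have h01 : IsPreconnected (cthickening δ ((fun x => v0 + ρ • (x - v0)) '' A k)
          ∪ cthickening δ ((fun x => v1 + ρ • (x - v1)) '' A k)) :=
        IsPreconnected.union' ⟨m01, hm01a, hm01b⟩ (himg v0).isPreconnected
          (himg v1).isPreconnected
      refine ⟨⟨m01, Or.inl (Or.inl hm01a)⟩, ?_⟩
      exact IsPreconnected.union' ⟨m02, Or.inl hm02a, hm02b⟩ h01 (himg v2).isPreconnected
  -- the key identity
  have hkey : cthickening ε (sierpinski ρ) = ⋂ k, cthickening ε (A k) := by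
    apply Set.Subset.antisymm
    · exact Set.subset_iInter fun k =>
        cthickening_subset_of_subset ε (Set.iInter_subset _ k)
    · intro x hx
      simp only [Set.mem_iInter] at hx
      have hsel : ∀ k, ∃ y ∈ A k, dist x y ≤ ε := by
        intro k
        have h := hx k
        rw [(hAc k).cthickening_eq_biUnion_closedBall hε0] at h
        simp only [Set.mem_iUnion, mem_closedBall, exists_prop] at h
        exact h
      choose a haA had using hsel
      obtain ⟨z, hzA0, φ, hφ, hconv2⟩ :=
        (hAc 0).tendsto_subseq (fun k => hAnti (Nat.zero_le k) (haA k))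
      have hzS : z ∈ sierpinski ρ := by
        refine Set.mem_iInter.2 fun m => ?_
        refine (hAc m).isClosed.mem_of_tendsto hconv2 ?_
        filter_upwards [Filter.eventually_ge_atTop m] with k hk
        exact hAnti (le_trans hk (hφ.le_apply)) (haA (φ k))
      have hdist : dist x z ≤ ε := by
        have ht : Filter.Tendsto (fun k => dist x (a (φ k))) Filter.atTop (nhds (dist x z)) :=
          Filter.Tendsto.dist tendsto_const_nhds hconv2
        exact le_of_tendsto ht (Filter.Eventually.of_forall fun k => had (φ k))
      exact mem_cthickening_of_dist_le x z ε _ hzS hdist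
  rw [hkey]
  exact sierpAux_isConnected_iInter_of_antitone
    (fun k => cthickening_subset_of_subset ε (hstep k))
    (fun k => (hAc k).cthickening)
    (fun k => hconn k ε hε)
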